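/- Let d ≥ 2, and for a = (a₁,...,a_d) ∈ ℤ_p^d, b = (b₁,...,b_{d−1}) ∈ ℤ_p^{d−1} let L(a,b) be the ℤ_p-Lie lattice on basis (x₀,...,x_d) with [x_i,x_j]=0, [x₀,x₁]=Σ_i a_i x_i, [x₀,x_{i+1}] = b_i x_i for i < d. For 1 < i ≤ d, the submodule I_i = ⟨x₁,...,x_{i−1}, p x_i,...,p x_d⟩ is an ideal of L(a,b) if and only if p divides a_j for all j ≥ i. -/

import Mathlib

/-- Let `d ≥ 2` and `L(a,b)` be the `ℤ_p`-Lie lattice on basis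
`(x₀,…,x_d)` with `[x_i,x_j]=0`, `[x₀,x₁]=Σ_i a_i x_i`, `[x₀,x_{i+1}] = b_i x_i`
for `i < d`. For `1 < i ≤ d`, the submodule
`I_i = ⟨x₁,…,x_{i−1}, p x_i,…,p x_d⟩` is an ideal of `L(a,b)` iff `p ∣ a_j` for all
`j ≥ i`. (Here the abelian part is indexed by `Fin d`, with `x j.succ` the paper's
`x_{j+1}`.) -/
theorem stmt_17 (p : ℕ) [Fact p.Prime] (d : ℕ) (hd : 2 ≤ d)
    (a : Fin d → ℤ_[p]) (b : Fin (d - 1) → ℤ_[p])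
    (L : Type*) [LieRing L] [LieAlgebra ℤ_[p] L]
    (x : Module.Basis (Fin (d + 1)) ℤ_[p] L)
    (habel : ∀ i j : Fin d, ⁅x i.succ, x j.succ⁆ = 0)
    (h1 : ⁅x (0 : Fin (d + 1)), x (Fin.succ ⟨0, by omega⟩)⁆ = ∑ i : Fin d, a i • x i.succ)
    (h2 : ∀ (i : ℕ) (h : i + 1 < d),
      ⁅x (0 : Fin (d + 1)), x (Fin.succ ⟨i + 1, h⟩)⁆ =
        b ⟨i, by omega⟩ • x (Fin.succ ⟨i, by omega⟩))
    (i : ℕ) (hi1 : 1 < i) (hi2 : i ≤ d)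
    (I : Submodule ℤ_[p] L)
    (hI : I = Submodule.span ℤ_[p]
      ({z : L | ∃ j : Fin d, (j : ℕ) + 1 < i ∧ z = x j.succ} ∪
       {z : L | ∃ j : Fin d, i ≤ (j : ℕ) + 1 ∧ z = (p : ℤ_[p]) • x j.succ})) :
    (∀ u : L, ∀ v ∈ I, ⁅u, v⁆ ∈ I) ↔
      ∀ j : Fin d, i ≤ (j : ℕ) + 1 → (p : ℤ_[p]) ∣ a j := by
  constructor
  · -- forward: ideal ⇒ divisibility
    intro hideal j hj
    have hx1 : x (Fin.succ (⟨0, by omega⟩ : Fin d)) ∈ I := by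
      rw [hI]
      exact Submodule.subset_span (Or.inl ⟨⟨0, by omega⟩, by simpa using hi1, rfl⟩)
    have hz : (∑ k : Fin d, a k • x k.succ) ∈ I := by
      rw [← h1]; exact hideal _ _ hx1
    have hIM : ∀ z ∈ I, ∀ k : Fin d, i ≤ (k : ℕ) + 1 → (p : ℤ_[p]) ∣ x.repr z k.succ := by
      intro z hz
      rw [hI] at hz
      induction hz using Submodule.span_induction with
      | mem w hw =>
        intro k hk
        rcases hw with ⟨m, hm, rfl⟩ | ⟨m, hm, rfl⟩
        · rw [Module.Basis.repr_self, Finsupp.single_apply]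
          have hne : m.succ ≠ k.succ := by
            simp only [ne_eq, Fin.succ_inj]
            intro h
            subst h
            omega
          simp [hne]
        · rw [map_smul, Finsupp.smul_apply, smul_eq_mul]
          exact dvd_mul_right _ _
      | zero => intro k hk; simp
      | add u v _ _ hu hv => intro k hk; rw [map_add]; exact dvd_add (hu k hk) (hv k hk)
      | smul c u _ hu => intro k hk; rw [map_smul]; exact Dvd.dvd.mul_left (hu k hk) c
    have hrep : x.repr (∑ k : Fin d, a k • x k.succ) j.succ = a j := by
      simp [Finsupp.single_apply, Fin.succ_inj]
    have := hIM _ hz j hj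
    rwa [hrep] at this
  · -- backward: divisibility ⇒ ideal
    intro hdvd u v hv
    have hxmem : ∀ j : Fin d, (j : ℕ) + 1 < i → x j.succ ∈ I := fun j hj => by
      rw [hI]; exact Submodule.subset_span (Or.inl ⟨j, hj, rfl⟩)
    have hpmem : ∀ j : Fin d, (p : ℤ_[p]) • x j.succ ∈ I := fun j => by
      by_cases hj : (j : ℕ) + 1 < i
      · exact Submodule.smul_mem _ _ (hxmem j hj)
      · rw [hI]; exact Submodule.subset_span (Or.inr ⟨j, by omega, rfl⟩)
    -- bracket of x 0 with basis vectors
    have fact1 : ∀ j : Fin d, (j : ℕ) + 1 < i → ⁅x (0 : Fin (d + 1)), x j.succ⁆ ∈ I := by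
      intro j hj
      rcases Nat.eq_zero_or_eq_succ_pred (j : ℕ) with h0 | hsucc
      · have hje : j = ⟨0, by omega⟩ := Fin.ext h0
        rw [hje, h1]
        refine Submodule.sum_mem _ fun k _ => ?_
        by_cases hk : (k : ℕ) + 1 < i
        · exact Submodule.smul_mem _ _ (hxmem k hk)
        · obtain ⟨c, hc⟩ := hdvd k (by omega)
          rw [hc, mul_comm, mul_smul]
          exact Submodule.smul_mem _ _ (hpmem k)
      · set m := (j : ℕ) - 1 with hm
        have hjm : (j : ℕ) = m + 1 := hsucc
        have hmd : m + 1 < d := by omega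
        have hje : j = ⟨m + 1, hmd⟩ := Fin.ext hjm
        rw [hje, h2 m hmd]
        exact Submodule.smul_mem _ _ (hxmem ⟨m, by omega⟩ (by simp; omega))
    have fact2 : ∀ j : Fin d, (p : ℤ_[p]) • ⁅x (0 : Fin (d + 1)), x j.succ⁆ ∈ I := by
      intro j
      rcases Nat.eq_zero_or_eq_succ_pred (j : ℕ) with h0 | hsucc
      · have hje : j = ⟨0, by omega⟩ := Fin.ext h0
        rw [hje, h1, Finset.smul_sum]
        refine Submodule.sum_mem _ fun k _ => ?_
        rw [smul_comm]
        exact Submodule.smul_mem _ _ (hpmem k)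
      · set m := (j : ℕ) - 1 with hm
        have hjm : (j : ℕ) = m + 1 := hsucc
        have hmd : m + 1 < d := by omega
        have hje : j = ⟨m + 1, hmd⟩ := Fin.ext hjm
        rw [hje, h2 m hmd, smul_comm]
        exact Submodule.smul_mem _ _ (hpmem ⟨m, by omega⟩)
    -- generators are stable under bracket with any u
    have hgen : ∀ w ∈ ({z : L | ∃ j : Fin d, (j : ℕ) + 1 < i ∧ z = x j.succ} ∪
        {z : L | ∃ j : Fin d, i ≤ (j : ℕ) + 1 ∧ z = (p : ℤ_[p]) • x j.succ}),
        ∀ u : L, ⁅u, w⁆ ∈ I := by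
      intro w hw u
      have hbasis : ∀ n : Fin (d + 1), ⁅x n, w⁆ ∈ I := by
        intro n
        induction n using Fin.cases with
        | zero =>
          rcases hw with ⟨m, hm, rfl⟩ | ⟨m, hm, rfl⟩
          · exact fact1 m hm
          · rw [lie_smul]
            exact fact2 m
        | succ k =>
          rcases hw with ⟨m, hm, rfl⟩ | ⟨m, hm, rfl⟩
          · rw [habel k m]; exact Submodule.zero_mem I
          · rw [lie_smul, habel k m, smul_zero]; exact Submodule.zero_mem I
      have hu : u ∈ Submodule.span ℤ_[p] (Set.range x) := by
        rw [Module.Basis.span_eq]; trivial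
      induction hu using Submodule.span_induction with
      | mem z hz => rcases hz with ⟨n, rfl⟩; exact hbasis n
      | zero => rw [zero_lie]; exact Submodule.zero_mem I
      | add s t _ _ hs ht => rw [add_lie]; exact Submodule.add_mem I hs ht
      | smul c s _ hs => rw [smul_lie]; exact Submodule.smul_mem I c hs
    rw [hI] at hv
    induction hv using Submodule.span_induction with
    | mem w hw => exact hgen w hw u
    | zero => rw [lie_zero]; exact Submodule.zero_mem I
    | add s t _ _ hs ht => rw [lie_add]; exact Submodule.add_mem I hs ht
    | smul c s _ hs => rw [lie_smul]; exact Submodule.smul_mem I c hs
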